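/- Let g, i, k be integers with g ≥ 9, i ≥ 0, 0 ≤ k ≤ 2, and 6i + 2k ≤ g − 3. Set (as rational numbers) a = (13g + 15)/2 and b = g. Then 3·((13/2)·b − a)·(i·(i+1)/2) + (((13/2)·k + 7/2)·b − k·a)·i ≥ 0. -/
import Mathlib

theorem stmt7 (g i k : ℤ) (hg : 9 ≤ g) (hi : 0 ≤ i) (hk0 : 0 ≤ k) (hk2 : k ≤ 2)
    (hrange : 6*i + 2*k ≤ g - 3)
    (a b : ℚ) (ha : a = (13*(g:ℚ) + 15)/2) (hb : b = (g:ℚ)) :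
    3 * ((13/2) * b - a) * ((i:ℚ) * ((i:ℚ) + 1) / 2)
      + (((13/2) * (k:ℚ) + 7/2) * b - (k:ℚ) * a) * (i:ℚ) ≥ 0 := by
  subst ha hb
  have hg' : (9:ℚ) ≤ (g:ℚ) := by exact_mod_cast hg
  have hi' : (0:ℚ) ≤ (i:ℚ) := by exact_mod_cast hi
  have hk0' : (0:ℚ) ≤ (k:ℚ) := by exact_mod_cast hk0
  have hk2' : (k:ℚ) ≤ 2 := by exact_mod_cast hk2
  have hr' : 6*(i:ℚ) + 2*(k:ℚ) ≤ (g:ℚ) - 3 := by exact_mod_cast hrange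
  rcases eq_or_lt_of_le hi with h0 | h1
  · rw [← h0]; norm_num
  · have hi1 : (1:ℚ) ≤ (i:ℚ) := by exact_mod_cast h1
    nlinarith [mul_nonneg hi' hi', mul_le_mul_of_nonneg_left hr' hi',
      mul_le_mul_of_nonneg_left hk2' hi', mul_le_mul_of_nonneg_right hi1 hi']
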